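/- Let (𝒱, J) be an essentially small site and let (ℬ, F) be a base for 𝒱, and equip ℬ with the F-induced topology. Then F is continuous: for every J-sheaf of sets 𝒢 on 𝒱, the presheaf on ℬ given by B ↦ 𝒢(F(B)) (i.e. the composition of 𝒢 with F^op) is a sheaf for the F-induced topology on ℬ. -/

import Mathlib

open CategoryTheory

universe u

/-- Property (⋆) of Beilinson for families of pairs indexed by `Fin n`:
for every object `X` of `V` and every finite family of pairs `(Bo α, f α)` with
`f α : X ⟶ F.obj (Bo α)`, there exist objects `B' β` of `B` and morphisms
`g β : F.obj (B' β) ⟶ X` generating a `J`-covering sieve of `X`, such that every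
composite `g β ≫ f α` is the image under `F` of a morphism `B' β ⟶ Bo α`. -/
def StarPropertyOn {B V : Type u} [SmallCategory B] [SmallCategory V]
    (F : B ⥤ V) (J : GrothendieckTopology V) (n : ℕ) : Prop :=
  ∀ (X : V) (Bo : Fin n → B) (f : ∀ α, X ⟶ F.obj (Bo α)),
    ∃ (ι : Type u) (B' : ι → B) (g : ∀ β, F.obj (B' β) ⟶ X),
      Sieve.ofArrows (fun β => F.obj (B' β)) g ∈ J X ∧
      ∀ (α : Fin n) (β : ι), ∃ h : B' β ⟶ Bo α, F.map h = g β ≫ f α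

/-- Property (⋆): the above for all finite families. -/
def StarProperty {B V : Type u} [SmallCategory B] [SmallCategory V]
    (F : B ⥤ V) (J : GrothendieckTopology V) : Prop :=
  ∀ n : ℕ, StarPropertyOn F J n


/-- If `(B, F)` is a base for the site `(V, J)` and `K` is the `F`-induced topology on `B`,
then `F` is continuous: composition with `F` sends `J`-sheaves of sets to `K`-sheaves. -/
theorem induced_topology_continuous {B V : Type u} [SmallCategory B] [SmallCategory V]
    (J : GrothendieckTopology V) (F : B ⥤ V) [F.Faithful]
    (hF : StarProperty F J)
    (K : GrothendieckTopology B)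
    (hK : ∀ (X : B) (S : Sieve X), S ∈ K X ↔ S.functorPushforward F ∈ J (F.obj X))
    (G : Vᵒᵖ ⥤ Type u) (hG : Presheaf.IsSheaf J G) :
    Presheaf.IsSheaf K (F.op ⋙ G) := by
  haveI : F.IsCoverDense J := by
    constructor
    intro X
    obtain ⟨ι, B', g, hcov, -⟩ := hF 0 X Fin.elim0 (fun α => α.elim0)
    refine J.superset_covering ?_ hcov
    rw [Sieve.ofArrows, Sieve.generate_le_iff]
    rintro Y f ⟨β⟩
    exact Presieve.in_coverByImage F (g β)
  haveI : F.IsLocallyFull J := by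
    constructor
    intro U V f
    obtain ⟨ι, B', g, hcov, hfac⟩ := hF 2 (F.obj U)
      (Fin.cons U (Fin.cons V Fin.elim0))
      (Fin.cons (𝟙 (F.obj U)) (Fin.cons f (fun i => i.elim0)))
    refine J.superset_covering ?_ hcov
    rw [Sieve.ofArrows, Sieve.generate_le_iff]
    rintro Y q ⟨β⟩
    obtain ⟨h₀, hh₀⟩ := hfac 0 β
    obtain ⟨h₁, hh₁⟩ := hfac 1 β
    have hh₀' : F.map h₀ = g β := hh₀.trans (Category.comp_id _)
    have hh₁' : F.map h₁ = g β ≫ f := hh₁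
    exact ⟨B' β, h₀, 𝟙 _, ⟨h₁, hh₁'.trans (congrArg (· ≫ f) hh₀'.symm)⟩, by simp; exact hh₀'.symm⟩
  have hKeq : K = F.inducedTopology J := by
    ext X S
    rw [Functor.mem_inducedTopology_iff_of_isCoverDense]
    exact hK X S
  subst hKeq
  exact F.op_comp_isSheaf (F.inducedTopology J) J ⟨G, hG⟩
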